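/- In a skip list over n elements where each node independently has a direct parent with probability 1/2, the length of the search path from the top level to any fixed element on the bottom level is O(log n) with high probability: for every constant c > 0 there is a constant d such that the search-path length exceeds d·log n with probability at most n^(-c). -/

import Mathlib

open MeasureTheory ProbabilityTheory

/-- The length of the (backward) search path from the top level of a skip list to
element `t` on the bottom level, for a skip list over `n` elements with heights `H`.
A node `(j, ℓ)` (with `1 ≤ ℓ ≤ H j`, `j ≤ t`) is visited exactly when no element
strictly between `j` and `t` reaches level `ℓ + 1`. -/
def searchPathLen (n : ℕ) (H : Fin n → ℕ) (t : Fin n) : ℕ :=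
  ∑ j : Fin n,
    ((Finset.Icc 1 (H j)).filter (fun ℓ =>
      j ≤ t ∧ ∀ j' : Fin n, j < j' → j' ≤ t → H j' < ℓ + 1)).card

namespace SkipListAux

/-- running max (at least 1) of `f` over `[b, t]`. -/
def Qf (f : ℕ → ℕ) (t b : ℕ) : ℕ := max 1 ((Finset.Icc b t).sup f)

/-- number of "records": `a ∈ [b,t]` with `f a ≥ Qf (a+1)`. -/
def Sf (f : ℕ → ℕ) (t b : ℕ) : ℕ :=
  ((Finset.Icc b t).filter (fun a => Qf f t (a+1) ≤ f a)).card

lemma Qf_of_gt {f : ℕ → ℕ} {t b : ℕ} (h : t < b) : Qf f t b = 1 := by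
  simp [Qf, Finset.Icc_eq_empty_of_lt h]

lemma Icc_insert {b t : ℕ} (h : b ≤ t) :
    Finset.Icc b t = insert b (Finset.Icc (b+1) t) := by
  ext x; simp; omega

lemma Qf_succ {f : ℕ → ℕ} {t b : ℕ} (h : b ≤ t) :
    Qf f t b = max (f b) (Qf f t (b+1)) := by
  rw [Qf, Icc_insert h, Finset.sup_insert, Qf]
  omega

lemma Qf_pos {f : ℕ → ℕ} {t b : ℕ} : 1 ≤ Qf f t b := le_max_left _ _

lemma Qf_antitone_succ {f : ℕ → ℕ} {t b : ℕ} : Qf f t (b+1) ≤ Qf f t b := by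
  rcases le_or_gt b t with h | h
  · rw [Qf_succ h]; omega
  · rw [Qf_of_gt h, Qf_of_gt (by omega)]

lemma Sf_succ {f : ℕ → ℕ} {t b : ℕ} (h : b ≤ t) :
    Sf f t b = (if Qf f t (b+1) ≤ f b then 1 else 0) + Sf f t (b+1) := by
  rw [Sf, Icc_insert h, Finset.filter_insert]
  split_ifs with hb
  · rw [Finset.card_insert_of_notMem (by simp)]
    simp [Sf]; ring
  · simp [Sf]

lemma Sf_of_gt {f : ℕ → ℕ} {t b : ℕ} (h : t < b) : Sf f t b = 0 := by
  simp [Sf, Finset.Icc_eq_empty_of_lt h]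

lemma card_contribution_le {f : ℕ → ℕ} {t a : ℕ} (h : a ≤ t) :
    (Finset.Icc (Qf f t (a+1)) (f a)).card
      ≤ (Qf f t a - Qf f t (a+1)) + (if Qf f t (a+1) ≤ f a then 1 else 0) := by
  have h1 : Qf f t a = max (f a) (Qf f t (a+1)) := Qf_succ h
  rw [Nat.card_Icc]
  split_ifs with h2 <;> omega

lemma telescope {f : ℕ → ℕ} {t : ℕ} (k : ℕ) :
    ∑ a ∈ Finset.range k, (Qf f t a - Qf f t (a+1)) = Qf f t 0 - Qf f t k := by
  induction k with
  | zero => simp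
  | succ k ih =>
    rw [Finset.sum_range_succ, ih]
    have h1 : Qf f t (k+1) ≤ Qf f t k := Qf_antitone_succ
    have h2 : Qf f t k ≤ Qf f t 0 := by
      clear ih h1
      induction k with
      | zero => exact le_refl _
      | succ k ih => exact le_trans Qf_antitone_succ ih
    omega

end SkipListAux

namespace SkipListAux

/-- extension of heights to ℕ. -/
def fext (n : ℕ) (H : Fin n → ℕ) : ℕ → ℕ := fun a => if h : a < n then H ⟨a, h⟩ else 0

lemma filter_eq_Icc (n : ℕ) (H : Fin n → ℕ) (t : Fin n) (j : Fin n) (hj : j.val ≤ t.val) :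
    ((Finset.Icc 1 (H j)).filter (fun ℓ =>
      j ≤ t ∧ ∀ j' : Fin n, j < j' → j' ≤ t → H j' < ℓ + 1))
      = Finset.Icc (Qf (fext n H) t.val (j.val+1)) (H j) := by
  ext ℓ
  simp only [Finset.mem_filter, Finset.mem_Icc, Fin.le_def, Fin.lt_def]
  have hsup : ((Finset.Icc (j.val+1) t.val).sup (fext n H) ≤ ℓ)
      ↔ (∀ j' : Fin n, j.val < j'.val → j'.val ≤ t.val → H j' < ℓ + 1) := by
    rw [Finset.sup_le_iff]
    constructor
    · intro h j' h1 h2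
      have := h j'.val (by simp [Finset.mem_Icc]; omega)
      rw [fext] at this
      simp only [j'.isLt, dif_pos, Fin.eta] at this
      omega
    · intro h x hx
      simp only [Finset.mem_Icc] at hx
      have hxn : x < n := lt_of_le_of_lt hx.2 t.isLt
      have := h ⟨x, hxn⟩ (by simpa using by omega) (by simpa using hx.2)
      rw [fext]
      simp only [hxn, dif_pos]
      omega
  constructor
  · rintro ⟨⟨h1, h2⟩, _, h4⟩
    refine ⟨?_, h2⟩
    have := hsup.mpr h4
    simp only [Qf]
    omega
  · rintro ⟨h1, h2⟩
    have hq : Qf (fext n H) (t.val) (j.val+1) ≤ ℓ := h1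
    rw [Qf] at hq
    refine ⟨⟨by omega, h2⟩, hj, hsup.mp (by omega)⟩

lemma searchPathLen_eq (n : ℕ) (H : Fin n → ℕ) (t : Fin n) :
    searchPathLen n H t
      = ∑ a ∈ Finset.Icc 0 t.val,
          (Finset.Icc (Qf (fext n H) t.val (a+1)) (fext n H a)).card := by
  classical
  have key : ∀ j : Fin n,
      ((Finset.Icc 1 (H j)).filter (fun ℓ =>
        j ≤ t ∧ ∀ j' : Fin n, j < j' → j' ≤ t → H j' < ℓ + 1)).card
      = (fun a : ℕ => if a ≤ t.val then
          (Finset.Icc (Qf (fext n H) t.val (a+1)) (fext n H a)).card else 0) j.val := by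
    intro j
    by_cases hj : j.val ≤ t.val
    · simp only [hj, if_pos]
      rw [filter_eq_Icc n H t j hj]
      congr 1
      rw [fext]
      simp [j.isLt]
    · simp only []
      rw [if_neg hj, Finset.card_eq_zero, Finset.filter_eq_empty_iff]
      intro ℓ _
      rw [Fin.le_def]
      tauto
  rw [searchPathLen]
  rw [Finset.sum_congr rfl (fun j _ => key j)]
  rw [Fin.sum_univ_eq_sum_range (fun a : ℕ => if a ≤ t.val then (Finset.Icc (Qf (fext n H) t.val (a+1)) (fext n H a)).card else 0) n]
  rw [← Finset.sum_filter]
  congr 1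
  ext x
  simp only [Finset.mem_filter, Finset.mem_range, Finset.mem_Icc]
  have := t.isLt
  omega

end SkipListAux

namespace SkipListAux

lemma Icc_zero_eq_range (t : ℕ) : Finset.Icc 0 t = Finset.range (t+1) := by
  ext x; simp

lemma searchPathLen_le (n : ℕ) (H : Fin n → ℕ) (t : Fin n) :
    searchPathLen n H t
      ≤ (Qf (fext n H) t.val 0 - 1) + Sf (fext n H) t.val 0 := by
  set f := fext n H
  rw [searchPathLen_eq n H t, Icc_zero_eq_range]
  calc ∑ a ∈ Finset.range (t.val+1), (Finset.Icc (Qf f t.val (a+1)) (f a)).card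
      ≤ ∑ a ∈ Finset.range (t.val+1),
          ((Qf f t.val a - Qf f t.val (a+1)) + (if Qf f t.val (a+1) ≤ f a then 1 else 0)) := by
        apply Finset.sum_le_sum
        intro a ha
        simp only [Finset.mem_range] at ha
        exact card_contribution_le (by omega)
    _ = (Qf f t.val 0 - Qf f t.val (t.val+1))
          + ∑ a ∈ Finset.range (t.val+1), (if Qf f t.val (a+1) ≤ f a then 1 else 0) := by
        rw [Finset.sum_add_distrib, telescope]
    _ = (Qf f t.val 0 - 1) + Sf f t.val 0 := by
        rw [Qf_of_gt (by omega : t.val < t.val + 1)]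
        congr 1
        rw [Sf, Finset.card_filter, Icc_zero_eq_range]

lemma main_det (n : ℕ) (H : Fin n → ℕ) (t : Fin n) (m : ℕ) (hm : 1 ≤ m)
    (h : 10*m - 1 < searchPathLen n H t) :
    (∃ a ∈ Finset.Icc 0 t.val, m+1 ≤ fext n H a)
      ∨ (9*m ≤ Sf (fext n H) t.val 0 ∧ 1 ≤ Qf (fext n H) t.val 0
          ∧ Qf (fext n H) t.val 0 ≤ m) := by
  have hle := searchPathLen_le n H t
  by_cases hQ : Qf (fext n H) t.val 0 ≤ m
  · exact Or.inr ⟨by omega, Qf_pos, hQ⟩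
  · left
    have : m+1 ≤ (Finset.Icc 0 t.val).sup (fext n H) := by
      rw [Qf] at hQ; omega
    rw [Finset.le_sup_iff (by omega : (0:ℕ) < m+1)] at this
    exact this

end SkipListAux

namespace SkipListAux

lemma Qf_congr {f g : ℕ → ℕ} {t b : ℕ} (h : ∀ a, b ≤ a → a ≤ t → f a = g a) :
    Qf f t b = Qf g t b := by
  rw [Qf, Qf, Finset.sup_congr rfl (fun a ha => by
    simp only [Finset.mem_Icc] at ha; exact h a ha.1 ha.2)]

lemma Sf_congr {f g : ℕ → ℕ} {t b : ℕ} (h : ∀ a, b ≤ a → a ≤ t → f a = g a) :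
    Sf f t b = Sf g t b := by
  rw [Sf, Sf]
  congr 1
  apply Finset.filter_congr
  intro a ha
  simp only [Finset.mem_Icc] at ha
  rw [h a ha.1 ha.2, Qf_congr (fun x hx1 hx2 => h x (by omega) hx2)]

lemma measurableSet_pi_nat {ι : Type*} [Finite ι] (s : Set (ι → ℕ)) : MeasurableSet s := by
  have hsing : ∀ x : ι → ℕ, MeasurableSet ({x} : Set (ι → ℕ)) := by
    intro x
    have : ({x} : Set (ι → ℕ)) = ⋂ i, (fun g : ι → ℕ => g i) ⁻¹' {x i} := by
      ext g
      simp [funext_iff]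
    rw [this]
    exact MeasurableSet.iInter (fun i => (measurable_pi_apply i) (measurableSet_singleton _))
  have : s = ⋃ x ∈ s, {x} := by simp
  rw [this]
  exact MeasurableSet.biUnion (Set.to_countable s) (fun x _ => hsing x)

end SkipListAux

namespace SkipListAux

open MeasureTheory ProbabilityTheory

variable {n : ℕ} {Ω : Type} [MeasurableSpace Ω] {μ : Measure Ω} [IsProbabilityMeasure μ]
  {H : Fin n → Ω → ℕ} {t : Fin n}

/-- The DP event: at least `s` records on `[b, t]` and running max equal to `v`. -/
def Aev (H : Fin n → Ω → ℕ) (t : Fin n) (b s v : ℕ) : Set Ω :=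
  {ω | s ≤ Sf (fext n (fun i => H i ω)) t.val b
    ∧ Qf (fext n (fun i => H i ω)) t.val b = v}

lemma indep_step (hmeas : ∀ i, Measurable (H i))
    (hindep : iIndepFun H μ)
    (b : ℕ) (hb : b < n) (T0 : Set ℕ) (s v : ℕ) :
    μ ({ω | H ⟨b, hb⟩ ω ∈ T0} ∩ Aev H t (b+1) s v)
      = μ {ω | H ⟨b, hb⟩ ω ∈ T0} * μ (Aev H t (b+1) s v) := by
  classical
  set S1 : Finset (Fin n) := {⟨b, hb⟩} with hS1
  set T1 : Finset (Fin n) := Finset.univ.filter (fun j => b < j.val) with hT1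
  have hdisj : Disjoint S1 T1 := by
    rw [Finset.disjoint_left]
    intro x
    simp only [hS1, hT1, Finset.mem_singleton, Finset.mem_filter, Finset.mem_univ, true_and]
    rintro rfl
    simp
  have hXY : IndepFun (fun ω (i : S1) => H i ω) (fun ω (i : T1) => H i ω) μ :=
    hindep.indepFun_finset S1 T1 hdisj hmeas
  have hmemT1 : ∀ (a : ℕ) (h1 : a < n), b < a → (⟨a, h1⟩ : Fin n) ∈ T1 := by
    intro a h1 h2; simp [hT1]; exact h2
  set ext : (↥T1 → ℕ) → ℕ → ℕ :=
    fun g a => if h : b < a ∧ a < n then g ⟨⟨a, h.2⟩, hmemT1 a h.2 h.1⟩ else 0 with hext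
  set SA : Set (↥T1 → ℕ) :=
    {g | s ≤ Sf (ext g) t.val (b+1) ∧ Qf (ext g) t.val (b+1) = v} with hSA
  have hA : Aev H t (b+1) s v = (fun ω (i : T1) => H i ω) ⁻¹' SA := by
    ext ω
    have hcong : ∀ a, b+1 ≤ a → a ≤ t.val →
        fext n (fun i => H i ω) a = ext (fun i : T1 => H i ω) a := by
      intro a h1 h2
      have han : a < n := lt_of_le_of_lt h2 t.isLt
      have hba : b < a := by omega
      simp [fext, hext, han, hba]
    simp only [Aev, Set.mem_setOf_eq, Set.mem_preimage, hSA]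
    rw [Sf_congr hcong, Qf_congr hcong]
  have hB : {ω | H ⟨b, hb⟩ ω ∈ T0}
      = (fun ω (i : S1) => H i ω) ⁻¹' {g | g ⟨⟨b, hb⟩, by simp [hS1]⟩ ∈ T0} := rfl
  rw [hA, hB]
  exact hXY.measure_inter_preimage_eq_mul _ _
    (measurableSet_pi_nat _) (measurableSet_pi_nat _)

end SkipListAux

namespace SkipListAux

open MeasureTheory ProbabilityTheory

variable {n : ℕ} {Ω : Type} [MeasurableSpace Ω] {μ : Measure Ω} [IsProbabilityMeasure μ]
  {H : Fin n → Ω → ℕ} {t : Fin n}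

lemma toReal_prob_le_one {A : Set Ω} : (μ A).toReal ≤ 1 := by
  simpa using ENNReal.toReal_mono ENNReal.one_ne_top prob_le_one

lemma meas_eq_toReal (hmeas : ∀ i, Measurable (H i))
    (htail : ∀ i (ℓ : ℕ), 1 ≤ ℓ → (μ {ω | ℓ ≤ H i ω}).toReal = (1 / 2 : ℝ) ^ (ℓ - 1))
    (i : Fin n) (v : ℕ) (hv : 1 ≤ v) :
    (μ {ω | H i ω = v}).toReal = (1/2 : ℝ)^v := by
  have hsplit : {ω | v ≤ H i ω} = {ω | H i ω = v} ∪ {ω | v+1 ≤ H i ω} := by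
    ext ω; simp only [Set.mem_setOf_eq, Set.mem_union]; omega
  have hdisj : Disjoint {ω | H i ω = v} {ω | v+1 ≤ H i ω} := by
    rw [Set.disjoint_left]; intro ω h1 h2; simp only [Set.mem_setOf_eq] at h1 h2; omega
  have hm2 : MeasurableSet {ω | v+1 ≤ H i ω} := (hmeas i) measurableSet_Ici
  have hadd : μ {ω | v ≤ H i ω} = μ {ω | H i ω = v} + μ {ω | v+1 ≤ H i ω} := by
    rw [hsplit, measure_union hdisj hm2]
  have h1 := htail i v hv
  have h2 := htail i (v+1) (by omega)
  rw [hadd, ENNReal.toReal_add (measure_ne_top _ _) (measure_ne_top _ _)] at h1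
  have hx : v + 1 - 1 = v := by omega
  rw [hx] at h2
  rw [h2] at h1
  have hpow : (1/2 : ℝ)^(v-1) * (1/2) = (1/2)^v := by
    rw [← pow_succ]; congr 1; omega
  nlinarith [h1, hpow]

lemma meas_le_toReal (hmeas : ∀ i, Measurable (H i))
    (htail : ∀ i (ℓ : ℕ), 1 ≤ ℓ → (μ {ω | ℓ ≤ H i ω}).toReal = (1 / 2 : ℝ) ^ (ℓ - 1))
    (i : Fin n) (v : ℕ) (hv : 1 ≤ v) :
    (μ {ω | H i ω ≤ v - 1}).toReal = 1 - (1/2 : ℝ)^(v-1) := by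
  have hcompl : {ω | H i ω ≤ v - 1} = {ω | v ≤ H i ω}ᶜ := by
    ext ω; simp only [Set.mem_setOf_eq, Set.mem_compl_iff, not_le]; omega
  have hms : MeasurableSet {ω | v ≤ H i ω} := (hmeas i) measurableSet_Ici
  rw [hcompl, measure_compl hms (measure_ne_top _ _),
    measure_univ, ENNReal.toReal_sub_of_le prob_le_one ENNReal.one_ne_top]
  simp [htail i v hv]

lemma geom4 (v : ℕ) : ∑ v' ∈ Finset.Icc 1 v, (4:ℝ)^v' ≤ 4/3 * 4^v := by
  induction v with
  | zero => norm_num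
  | succ v ih =>
    rw [Finset.sum_Icc_succ_top (by omega)]
    have : (4:ℝ)^(v+1) = 4 * 4^v := by ring
    nlinarith [ih]

lemma dp (hmeas : ∀ i, Measurable (H i))
    (hindep : iIndepFun H μ)
    (htail : ∀ i (ℓ : ℕ), 1 ≤ ℓ → (μ {ω | ℓ ≤ H i ω}).toReal = (1 / 2 : ℝ) ^ (ℓ - 1))
    (k : ℕ) :
    ∀ b s v : ℕ, t.val + 1 - b ≤ k → 1 ≤ v →
      (μ (Aev H t b s v)).toReal ≤ (2/3 : ℝ)^s * 4^v := by
  induction k with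
  | zero =>
    intro b s v hk hv
    -- b > t, so no records
    have hbt : t.val < b := by omega
    rcases Nat.eq_zero_or_pos s with rfl | hs
    · calc (μ (Aev H t b 0 v)).toReal ≤ 1 := toReal_prob_le_one
        _ ≤ (2/3:ℝ)^0 * 4^v := by
            simp only [pow_zero, one_mul]
            exact one_le_pow₀ (by norm_num : (1:ℝ) ≤ 4)
    · have : Aev H t b s v = ∅ := by
        rw [Set.eq_empty_iff_forall_notMem]
        rintro ω ⟨h1, h2⟩
        rw [Sf_of_gt hbt] at h1
        omega
      rw [this]
      simp
      positivity
  | succ k ih =>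
    intro b s v hk hv
    rcases lt_or_ge t.val b with hbt | hbt
    · -- same as base case
      rcases Nat.eq_zero_or_pos s with rfl | hs
      · calc (μ (Aev H t b 0 v)).toReal ≤ 1 := toReal_prob_le_one
          _ ≤ (2/3:ℝ)^0 * 4^v := by
              simp only [pow_zero, one_mul]
              exact one_le_pow₀ (by norm_num : (1:ℝ) ≤ 4)
      · have : Aev H t b s v = ∅ := by
          rw [Set.eq_empty_iff_forall_notMem]
          rintro ω ⟨h1, h2⟩
          rw [Sf_of_gt hbt] at h1
          omega
        rw [this]
        simp
        positivity
    rcases Nat.eq_zero_or_pos s with rfl | hs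
    · calc (μ (Aev H t b 0 v)).toReal ≤ 1 := toReal_prob_le_one
        _ ≤ (2/3:ℝ)^0 * 4^v := by
            simp only [pow_zero, one_mul]
            exact one_le_pow₀ (by norm_num : (1:ℝ) ≤ 4)
    obtain ⟨s', rfl⟩ : ∃ s', s = s' + 1 := ⟨s - 1, by omega⟩
    have hb : b < n := lt_of_le_of_lt hbt t.isLt
    set B1 : Set Ω := {ω | H ⟨b, hb⟩ ω ∈ {x : ℕ | x ≤ v - 1}} with hB1
    set B2 : Set Ω := {ω | H ⟨b, hb⟩ ω ∈ {x : ℕ | x = v}} with hB2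
    have hsub : Aev H t b (s'+1) v ⊆
        (B1 ∩ Aev H t (b+1) (s'+1) v)
          ∪ ⋃ v' ∈ Finset.Icc 1 v, (B2 ∩ Aev H t (b+1) s' v') := by
      rintro ω ⟨h1, h2⟩
      set f : ℕ → ℕ := fext n (fun i => H i ω) with hf
      have hfb : f b = H ⟨b, hb⟩ ω := by simp [hf, fext, hb]
      have hQs : Qf f t.val b = max (f b) (Qf f t.val (b+1)) := Qf_succ hbt
      have hSs : Sf f t.val b
          = (if Qf f t.val (b+1) ≤ f b then 1 else 0) + Sf f t.val (b+1) := Sf_succ hbt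
      by_cases hrec : Qf f t.val (b+1) ≤ f b
      · right
        rw [Set.mem_iUnion₂]
        refine ⟨Qf f t.val (b+1), ?_, ?_, ?_, rfl⟩
        · simp only [Finset.mem_Icc]
          constructor
          · exact Qf_pos
          · calc Qf f t.val (b+1) ≤ f b := hrec
              _ ≤ Qf f t.val b := by rw [hQs]; omega
              _ = v := h2
        · simp only [hB2, Set.mem_setOf_eq, ← hfb]
          rw [hQs] at h2
          omega
        · show s' ≤ Sf (fext n fun i => H i ω) t.val (b+1)
          rw [← hf]
          rw [if_pos hrec] at hSs
          omega
      · left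
        push_neg at hrec
        refine ⟨?_, ?_, ?_⟩
        · simp only [hB1, Set.mem_setOf_eq, ← hfb]
          rw [hQs] at h2
          omega
        · show s' + 1 ≤ Sf (fext n fun i => H i ω) t.val (b+1)
          rw [← hf]
          rw [if_neg (by omega)] at hSs
          omega
        · show Qf (fext n fun i => H i ω) t.val (b+1) = v
          rw [← hf]
          rw [hQs] at h2
          omega
    have hmeaseq : μ (B1 ∩ Aev H t (b+1) (s'+1) v)
        = μ B1 * μ (Aev H t (b+1) (s'+1) v) :=
      indep_step hmeas hindep b hb _ _ _
    have hmeaseq2 : ∀ v', μ (B2 ∩ Aev H t (b+1) s' v')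
        = μ B2 * μ (Aev H t (b+1) s' v') := fun v' =>
      indep_step hmeas hindep b hb _ _ _
    have hENN : μ (Aev H t b (s'+1) v)
        ≤ μ B1 * μ (Aev H t (b+1) (s'+1) v)
          + ∑ v' ∈ Finset.Icc 1 v, μ B2 * μ (Aev H t (b+1) s' v') := by
      refine le_trans (measure_mono hsub) (le_trans (measure_union_le _ _) ?_)
      gcongr
      · exact hmeaseq.le
      · refine le_trans (measure_biUnion_finset_le _ _) ?_
        exact Finset.sum_le_sum (fun v' _ => (hmeaseq2 v').le)
    have hne1 : μ B1 * μ (Aev H t (b+1) (s'+1) v) ≠ ⊤ :=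
      ENNReal.mul_ne_top (measure_ne_top _ _) (measure_ne_top _ _)
    have hne2 : (∑ v' ∈ Finset.Icc 1 v, μ B2 * μ (Aev H t (b+1) s' v')) ≠ ⊤ :=
      ENNReal.sum_ne_top.mpr (fun v' _ =>
        ENNReal.mul_ne_top (measure_ne_top _ _) (measure_ne_top _ _))
    have htr : (μ (Aev H t b (s'+1) v)).toReal
        ≤ (μ B1).toReal * (μ (Aev H t (b+1) (s'+1) v)).toReal
          + ∑ v' ∈ Finset.Icc 1 v, (μ B2).toReal * (μ (Aev H t (b+1) s' v')).toReal := by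
      have := ENNReal.toReal_mono (by exact ENNReal.add_ne_top.mpr ⟨hne1, hne2⟩) hENN
      rw [ENNReal.toReal_add hne1 hne2, ENNReal.toReal_mul, ENNReal.toReal_sum
        (fun v' _ => ENNReal.mul_ne_top (measure_ne_top _ _) (measure_ne_top _ _))] at this
      simpa [ENNReal.toReal_mul] using this
    -- coordinate probabilities
    have hPB1 : (μ B1).toReal = 1 - (1/2 : ℝ)^(v-1) := meas_le_toReal hmeas htail _ v hv
    have hPB2 : (μ B2).toReal = (1/2 : ℝ)^v := meas_eq_toReal hmeas htail _ v hv
    -- apply IH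
    have hIH1 : (μ (Aev H t (b+1) (s'+1) v)).toReal ≤ (2/3 : ℝ)^(s'+1) * 4^v :=
      ih (b+1) (s'+1) v (by omega) hv
    have hIH2 : ∀ v' ∈ Finset.Icc 1 v,
        (μ (Aev H t (b+1) s' v')).toReal ≤ (2/3 : ℝ)^s' * 4^v' := by
      intro v' hv'
      simp only [Finset.mem_Icc] at hv'
      exact ih (b+1) s' v' (by omega) hv'.1
    have hsum : ∑ v' ∈ Finset.Icc 1 v, (μ B2).toReal * (μ (Aev H t (b+1) s' v')).toReal
        ≤ (1/2 : ℝ)^v * ((2/3)^s' * (4/3 * 4^v)) := by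
      rw [hPB2]
      calc ∑ v' ∈ Finset.Icc 1 v, (1/2:ℝ)^v * (μ (Aev H t (b+1) s' v')).toReal
          ≤ ∑ v' ∈ Finset.Icc 1 v, (1/2:ℝ)^v * ((2/3)^s' * 4^v') := by
            refine Finset.sum_le_sum (fun v' hv' => ?_)
            have := hIH2 v' hv'
            have h0 : (0:ℝ) ≤ (1/2:ℝ)^v := by positivity
            nlinarith [ENNReal.toReal_nonneg (a := μ (Aev H t (b+1) s' v'))]
        _ = (1/2:ℝ)^v * (2/3)^s' * (∑ v' ∈ Finset.Icc 1 v, (4:ℝ)^v') := by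
            rw [Finset.mul_sum]
            congr 1
            ext v'
            ring
        _ ≤ (1/2:ℝ)^v * ((2/3)^s' * (4/3 * 4^v)) := by
            have := geom4 v
            have h0 : (0:ℝ) ≤ (1/2:ℝ)^v * (2/3)^s' := by positivity
            nlinarith [h0, this]
    have hterm1 : (μ B1).toReal * (μ (Aev H t (b+1) (s'+1) v)).toReal
        ≤ (1 - (1/2:ℝ)^(v-1)) * ((2/3)^(s'+1) * 4^v) := by
      rw [hPB1]
      have h1 : (1/2:ℝ)^(v-1) ≤ 1 := by
        apply pow_le_one₀ <;> norm_num
      have h2 : (0:ℝ) ≤ 1 - (1/2:ℝ)^(v-1) := by linarith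
      exact mul_le_mul_of_nonneg_left hIH1 h2
    -- final arithmetic
    have hhalf : (1/2:ℝ)^(v-1) = 2 * (1/2)^v := by
      have : v - 1 + 1 = v := by omega
      calc (1/2:ℝ)^(v-1) = (1/2)^(v-1) * ((1/2) * 2) := by ring
        _ = (1/2)^(v-1+1) * 2 := by rw [pow_succ]; ring
        _ = 2 * (1/2)^v := by rw [this]; ring
    calc (μ (Aev H t b (s'+1) v)).toReal
        ≤ (1 - (1/2:ℝ)^(v-1)) * ((2/3)^(s'+1) * 4^v)
          + (1/2 : ℝ)^v * ((2/3)^s' * (4/3 * 4^v)) := by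
          refine le_trans htr ?_
          exact add_le_add hterm1 hsum
      _ ≤ (2/3 : ℝ)^(s'+1) * 4^v := by
          rw [hhalf, pow_succ]
          have h0 : (0:ℝ) ≤ (1/2:ℝ)^v := by positivity
          have h1 : (0:ℝ) ≤ (2/3:ℝ)^s' := by positivity
          have h2 : (0:ℝ) ≤ (4:ℝ)^v := by positivity
          nlinarith [mul_nonneg (mul_nonneg h0 h1) h2]

end SkipListAux

namespace SkipListAux

open MeasureTheory ProbabilityTheory

variable {n : ℕ} {Ω : Type} [MeasurableSpace Ω] {μ : Measure Ω} [IsProbabilityMeasure μ]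
  {H : Fin n → Ω → ℕ} {t : Fin n}

lemma final_prob (hmeas : ∀ i, Measurable (H i))
    (hindep : iIndepFun H μ)
    (htail : ∀ i (ℓ : ℕ), 1 ≤ ℓ → (μ {ω | ℓ ≤ H i ω}).toReal = (1 / 2 : ℝ) ^ (ℓ - 1))
    (m : ℕ) (hm : 1 ≤ m) :
    (μ {ω | 10*m - 1 < searchPathLen n (fun i => H i ω) t}).toReal
      ≤ (n:ℝ) * (1/2:ℝ)^m + (2/3:ℝ)^(9*m) * (4/3 * 4^m) := by
  classical
  set U1 : Set Ω := ⋃ a ∈ Finset.Icc 0 t.val, {ω | m+1 ≤ fext n (fun i => H i ω) a} with hU1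
  set U2 : Set Ω := ⋃ v ∈ Finset.Icc 1 m, Aev H t 0 (9*m) v with hU2
  have hsub : {ω | 10*m - 1 < searchPathLen n (fun i => H i ω) t} ⊆ U1 ∪ U2 := by
    intro ω hω
    simp only [Set.mem_setOf_eq] at hω
    rcases main_det n (fun i => H i ω) t m hm hω with ⟨a, ha, hge⟩ | ⟨hS, hQ1, hQm⟩
    · left
      rw [hU1, Set.mem_iUnion₂]
      exact ⟨a, ha, hge⟩
    · right
      rw [hU2, Set.mem_iUnion₂]
      exact ⟨Qf (fext n (fun i => H i ω)) t.val 0, by simp only [Finset.mem_Icc]; omega,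
        hS, rfl⟩
  have hENN : μ {ω | 10*m - 1 < searchPathLen n (fun i => H i ω) t}
      ≤ ∑ a ∈ Finset.Icc 0 t.val, μ {ω | m+1 ≤ fext n (fun i => H i ω) a}
        + ∑ v ∈ Finset.Icc 1 m, μ (Aev H t 0 (9*m) v) := by
    refine le_trans (measure_mono hsub) (le_trans (measure_union_le _ _) ?_)
    exact add_le_add (measure_biUnion_finset_le _ _) (measure_biUnion_finset_le _ _)
  have hne1 : (∑ a ∈ Finset.Icc 0 t.val, μ {ω | m+1 ≤ fext n (fun i => H i ω) a}) ≠ ⊤ :=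
    ENNReal.sum_ne_top.mpr (fun _ _ => measure_ne_top _ _)
  have hne2 : (∑ v ∈ Finset.Icc 1 m, μ (Aev H t 0 (9*m) v)) ≠ ⊤ :=
    ENNReal.sum_ne_top.mpr (fun _ _ => measure_ne_top _ _)
  have htr := ENNReal.toReal_mono (ENNReal.add_ne_top.mpr ⟨hne1, hne2⟩) hENN
  rw [ENNReal.toReal_add hne1 hne2, ENNReal.toReal_sum (fun _ _ => measure_ne_top _ _),
    ENNReal.toReal_sum (fun _ _ => measure_ne_top _ _)] at htr
  refine le_trans htr (add_le_add ?_ ?_)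
  · -- first sum
    have hperA : ∀ a ∈ Finset.Icc 0 t.val,
        (μ {ω | m+1 ≤ fext n (fun i => H i ω) a}).toReal = (1/2:ℝ)^m := by
      intro a ha
      simp only [Finset.mem_Icc] at ha
      have han : a < n := lt_of_le_of_lt ha.2 t.isLt
      have : {ω | m+1 ≤ fext n (fun i => H i ω) a} = {ω | m+1 ≤ H ⟨a, han⟩ ω} := by
        ext ω; simp [fext, han]
      rw [this, htail ⟨a, han⟩ (m+1) (by omega), Nat.add_sub_cancel]
    rw [Finset.sum_congr rfl hperA, Finset.sum_const, Nat.card_Icc, nsmul_eq_mul]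
    have hle : ((t.val + 1 - 0 : ℕ) : ℝ) ≤ (n : ℝ) := by
      have := t.isLt
      exact_mod_cast by omega
    have hpos : (0:ℝ) ≤ (1/2:ℝ)^m := by positivity
    nlinarith
  · -- second sum
    have hperV : ∀ v ∈ Finset.Icc 1 m,
        (μ (Aev H t 0 (9*m) v)).toReal ≤ (2/3:ℝ)^(9*m) * 4^v := by
      intro v hv
      simp only [Finset.mem_Icc] at hv
      exact dp hmeas hindep htail (t.val+1) 0 (9*m) v (by omega) hv.1
    calc ∑ v ∈ Finset.Icc 1 m, (μ (Aev H t 0 (9*m) v)).toReal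
        ≤ ∑ v ∈ Finset.Icc 1 m, (2/3:ℝ)^(9*m) * 4^v := Finset.sum_le_sum hperV
      _ = (2/3:ℝ)^(9*m) * ∑ v ∈ Finset.Icc 1 m, (4:ℝ)^v := by rw [Finset.mul_sum]
      _ ≤ (2/3:ℝ)^(9*m) * (4/3 * 4^m) := by
          have := geom4 m
          have h0 : (0:ℝ) ≤ (2/3:ℝ)^(9*m) := by positivity
          nlinarith

end SkipListAux

namespace SkipListAux

lemma final_real (c : ℝ) (hc : 0 < c) (n : ℕ) (hn : 2 ≤ n) (m : ℕ)
    (hmlb : (c+1) * Real.log n / Real.log 2 + 1 ≤ (m:ℝ)) :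
    (n:ℝ) * (1/2:ℝ)^m + (2/3:ℝ)^(9*m) * (4/3 * 4^m) ≤ (n:ℝ)^(-c) := by
  have hn0 : (0:ℝ) < n := by
    have : (2:ℝ) ≤ (n:ℝ) := by exact_mod_cast hn
    linarith
  have hn1 : (1:ℝ) ≤ n := by
    have : (2:ℝ) ≤ (n:ℝ) := by exact_mod_cast hn
    linarith
  have hlog2 : 0 < Real.log 2 := Real.log_pos one_lt_two
  have hnc : (0:ℝ) < (n:ℝ)^c := Real.rpow_pos_of_pos hn0 c
  have hncm : (0:ℝ) < (n:ℝ)^(-c) := Real.rpow_pos_of_pos hn0 (-c)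
  have hnc1 : (0:ℝ) < (n:ℝ)^(c+1) := Real.rpow_pos_of_pos hn0 (c+1)
  -- key: 2 * n^(c+1) ≤ 2^m
  have hkey : (2:ℝ) * (n:ℝ)^(c+1) ≤ (2:ℝ)^(m:ℕ) := by
    have h1 : ((2:ℝ))^(m:ℕ) = (2:ℝ)^((m:ℕ):ℝ) := (Real.rpow_natCast 2 m).symm
    have h2 : (2:ℝ)^((c+1)*Real.log n/Real.log 2 + 1) ≤ (2:ℝ)^((m:ℕ):ℝ) :=
      Real.rpow_le_rpow_of_exponent_le one_le_two hmlb
    have h3 : (2:ℝ)^((c+1)*Real.log n/Real.log 2 + 1)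
        = (2:ℝ)^((c+1)*Real.log n/Real.log 2) * 2 := by
      rw [Real.rpow_add two_pos, Real.rpow_one]
    have h4 : (2:ℝ)^((c+1)*Real.log n/Real.log 2) = (n:ℝ)^(c+1) := by
      rw [Real.rpow_def_of_pos two_pos, Real.rpow_def_of_pos hn0]
      congr 1
      field_simp
    rw [h1]
    rw [h3, h4] at h2
    linarith
  have h2mpos : (0:ℝ) < (2:ℝ)^(m:ℕ) := by positivity
  -- term 1
  have hterm1 : (n:ℝ) * (1/2:ℝ)^m ≤ (1/2) * (n:ℝ)^(-c) := by
    have hp : (1/2:ℝ)^m = ((2:ℝ)^(m:ℕ))⁻¹ := by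
      rw [one_div, inv_pow]
    rw [hp]
    have hsplit : (n:ℝ)^(c+1) = (n:ℝ)^c * n := by
      rw [Real.rpow_add hn0, Real.rpow_one]
    have hneg : (n:ℝ)^(-c) = ((n:ℝ)^c)⁻¹ := Real.rpow_neg (le_of_lt hn0) c
    have hinv : ((2:ℝ)^(m:ℕ))⁻¹ ≤ ((2:ℝ) * (n:ℝ)^(c+1))⁻¹ := by
      apply inv_anti₀
      · positivity
      · exact hkey
    have heq : (n:ℝ) * ((2:ℝ) * (n:ℝ)^(c+1))⁻¹ = (1/2) * (n:ℝ)^(-c) := by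
      rw [hsplit, hneg]
      field_simp
    calc (n:ℝ) * ((2:ℝ)^(m:ℕ))⁻¹ ≤ (n:ℝ) * ((2:ℝ) * (n:ℝ)^(c+1))⁻¹ := by
          apply mul_le_mul_of_nonneg_left hinv (le_of_lt hn0)
      _ = (1/2) * (n:ℝ)^(-c) := heq
  -- term 2
  have hterm2 : (2/3:ℝ)^(9*m) * (4/3 * 4^m) ≤ (1/2) * (n:ℝ)^(-c) := by
    have e1 : (2/3:ℝ)^(9*m) * 4^m = ((2/3:ℝ)^9 * 4)^m := by
      rw [pow_mul, ← mul_pow]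
    have e2 : ((2/3:ℝ)^9 * 4) ≤ (1/8:ℝ) := by norm_num
    have e3 : (2/3:ℝ)^(9*m) * 4^m ≤ (1/8:ℝ)^m := by
      rw [e1]
      apply pow_le_pow_left₀ (by positivity) e2
    have e4 : (1/8:ℝ)^m = (((2:ℝ)^(m:ℕ))^3)⁻¹ := by
      rw [← pow_mul, show (1/8:ℝ) = ((2:ℝ)^3)⁻¹ by norm_num, inv_pow, ← pow_mul,
        Nat.mul_comm]
    have hB1 : (1:ℝ) ≤ (n:ℝ)^(c+1) := Real.one_le_rpow hn1 (by linarith)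
    have hAB : (n:ℝ)^c ≤ (n:ℝ)^(c+1) :=
      Real.rpow_le_rpow_of_exponent_le hn1 (by linarith)
    have hB2 : (1:ℝ) ≤ ((n:ℝ)^(c+1))^2 := by nlinarith [hB1]
    have hBB : (n:ℝ)^(c+1) ≤ ((n:ℝ)^(c+1))^3 := by nlinarith [hB1, hB2, hnc1]
    have hcube : (8:ℝ) * (n:ℝ)^c ≤ ((2:ℝ)^(m:ℕ))^3 := by
      calc (8:ℝ) * (n:ℝ)^c ≤ 8 * (n:ℝ)^(c+1) := by linarith
        _ ≤ 8 * ((n:ℝ)^(c+1))^3 := by linarith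
        _ = (2 * (n:ℝ)^(c+1))^3 := by ring
        _ ≤ ((2:ℝ)^(m:ℕ))^3 := pow_le_pow_left₀ (by positivity) hkey 3
    have e5 : (((2:ℝ)^(m:ℕ))^3)⁻¹ ≤ ((8:ℝ) * (n:ℝ)^c)⁻¹ := by
      apply inv_anti₀
      · positivity
      · exact hcube
    have hneg : (n:ℝ)^(-c) = ((n:ℝ)^c)⁻¹ := Real.rpow_neg (le_of_lt hn0) c
    calc (2/3:ℝ)^(9*m) * (4/3 * 4^m) = (4/3) * ((2/3:ℝ)^(9*m) * 4^m) := by ring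
      _ ≤ (4/3) * (1/8:ℝ)^m := by linarith [e3]
      _ = (4/3) * (((2:ℝ)^(m:ℕ))^3)⁻¹ := by rw [e4]
      _ ≤ (4/3) * ((8:ℝ) * (n:ℝ)^c)⁻¹ := by linarith [e5]
      _ = (1/6) * ((n:ℝ)^c)⁻¹ := by
          rw [mul_inv]
          ring
      _ ≤ (1/2) * (n:ℝ)^(-c) := by
          rw [hneg]
          have : (0:ℝ) < ((n:ℝ)^c)⁻¹ := by positivity
          linarith
  linarith

end SkipListAux

open MeasureTheory ProbabilityTheory in
theorem searchPath_length_whp_aux :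
    ∀ c : ℝ, 0 < c → ∃ d : ℝ, 0 < d ∧
      ∀ (n : ℕ), 2 ≤ n →
      ∀ (Ω : Type) [MeasurableSpace Ω] (μ : Measure Ω) [IsProbabilityMeasure μ]
        (H : Fin n → Ω → ℕ),
        (∀ i, Measurable (H i)) →
        iIndepFun H μ →
        (∀ i (ℓ : ℕ), 1 ≤ ℓ → (μ {ω | ℓ ≤ H i ω}).toReal = (1 / 2 : ℝ) ^ (ℓ - 1)) →
        ∀ t : Fin n,
          (μ {ω | d * Real.log n < (searchPathLen n (fun i => H i ω) t : ℝ)}).toReal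
            ≤ (n : ℝ) ^ (-c) := by
  intro c hc
  have hlog2 : 0 < Real.log 2 := Real.log_pos one_lt_two
  refine ⟨10*(c+3)/Real.log 2, by positivity, ?_⟩
  intro n hn Ω _ μ _ H hmeas hindep htail t
  set m := ⌈(c+1) * Real.log n / Real.log 2⌉₊ + 1 with hm
  have hm1 : 1 ≤ m := by omega
  have hlogn2 : Real.log 2 ≤ Real.log n :=
    Real.log_le_log (by norm_num) (by exact_mod_cast hn)
  have hlogn0 : 0 < Real.log n := lt_of_lt_of_le hlog2 hlogn2
  have hx0 : 0 ≤ (c+1) * Real.log n / Real.log 2 := by positivity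
  have hmlb : (c+1) * Real.log n / Real.log 2 + 1 ≤ (m:ℝ) := by
    have := Nat.le_ceil ((c+1) * Real.log n / Real.log 2)
    rw [hm]
    push_cast
    linarith
  have hmub : (m:ℝ) ≤ (c+1) * Real.log n / Real.log 2 + 2 := by
    have := Nat.ceil_lt_add_one hx0
    rw [hm]
    push_cast
    linarith
  clear_value m
  have hklb : ((10*m - 1 : ℕ) : ℝ) ≤ (10*(c+3)/Real.log 2) * Real.log n := by
    have h1 : ((10*m - 1 : ℕ):ℝ) ≤ 10*(m:ℝ) := by
      have h0 : ((10*m - 1 : ℕ):ℝ) ≤ ((10*m : ℕ):ℝ) := Nat.cast_le.mpr (by omega)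
      calc ((10*m - 1 : ℕ):ℝ) ≤ ((10*m : ℕ):ℝ) := h0
        _ = 10*(m:ℝ) := by push_cast; ring
    have h2 : (m:ℝ) ≤ (c+3)/Real.log 2 * Real.log n := by
      have h3 : 1 ≤ Real.log n / Real.log 2 := (one_le_div hlog2).mpr hlogn2
      calc (m:ℝ) ≤ (c+1)*Real.log n/Real.log 2 + 2 := hmub
        _ ≤ (c+1)*Real.log n/Real.log 2 + 2 * (Real.log n / Real.log 2) := by linarith
        _ = (c+3)/Real.log 2 * Real.log n := by field_simp; ring
    have h3 : 10 * ((c+3)/Real.log 2 * Real.log n) = 10*(c+3)/Real.log 2 * Real.log n := by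
      ring
    linarith
  have hsub : {ω | (10*(c+3)/Real.log 2) * Real.log n
        < (searchPathLen n (fun i => H i ω) t : ℝ)}
      ⊆ {ω | 10*m - 1 < searchPathLen n (fun i => H i ω) t} := by
    intro ω hω
    simp only [Set.mem_setOf_eq] at hω ⊢
    have : ((10*m-1:ℕ):ℝ) < ((searchPathLen n (fun i => H i ω) t : ℕ):ℝ) :=
      lt_of_le_of_lt hklb hω
    exact_mod_cast this
  calc (μ {ω | (10*(c+3)/Real.log 2) * Real.log n
          < (searchPathLen n (fun i => H i ω) t : ℝ)}).toReal
      ≤ (μ {ω | 10*m - 1 < searchPathLen n (fun i => H i ω) t}).toReal :=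
        ENNReal.toReal_mono (measure_ne_top _ _) (measure_mono hsub)
    _ ≤ (n:ℝ) * (1/2:ℝ)^m + (2/3:ℝ)^(9*m) * (4/3 * 4^m) :=
        SkipListAux.final_prob hmeas hindep htail m hm1
    _ ≤ (n:ℝ)^(-c) := SkipListAux.final_real c hc n hn m hmlb

/-- In a skip list over `n` elements with i.i.d. `Geometric(1/2)` heights
(each node has a direct parent with probability `1/2`), the search path to any fixed
element has length `O(log n)` w.h.p.: for every `c > 0` there is `d > 0` such that the
search-path length exceeds `d·log n` with probability at most `n^(-c)`. -/
theorem searchPath_length_whp :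
    ∀ c : ℝ, 0 < c → ∃ d : ℝ, 0 < d ∧
      ∀ (n : ℕ), 2 ≤ n →
      ∀ (Ω : Type) [MeasurableSpace Ω] (μ : Measure Ω) [IsProbabilityMeasure μ]
        (H : Fin n → Ω → ℕ),
        (∀ i, Measurable (H i)) →
        iIndepFun H μ →
        (∀ i (ℓ : ℕ), 1 ≤ ℓ → (μ {ω | ℓ ≤ H i ω}).toReal = (1 / 2 : ℝ) ^ (ℓ - 1)) →
        ∀ t : Fin n,
          (μ {ω | d * Real.log n < (searchPathLen n (fun i => H i ω) t : ℝ)}).toReal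
            ≤ (n : ℝ) ^ (-c) :=
  searchPath_length_whp_aux
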